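/- arXiv:1609.06031 — 2 statements merged into one kernel-verified Lean document; each statement's English description precedes it below -/
import Mathlib

section
/- Let Z_1,…,Z_r be i.i.d. standard normal random variables, let μ = (μ_1,…,μ_r) ∈ ℝ^r with λ = ‖μ‖² > 0, and set W = Σ_{i=1}^r (Z_i + μ_i)² (so W has a non-central chi-square distribution with r degrees of freedom and non-centrality parameter λ). Then for every t ∈ ℝ, P(W > t) ≤ P(Σ_{i=1}^r Z_i² > (t−λ)/2) + P(Z > (t−λ)/(4√λ)), where Z is a standard normal random variable. -/
open MeasureTheory ProbabilityTheory Matrix Filter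
open scoped ENNReal NNReal Topology BigOperators

noncomputable section

/-- The submatrix of `X` consisting of the columns indexed by the model `α`. -/
def colSub {n p : ℕ} (X : Matrix (Fin n) (Fin p) ℝ) (α : Finset (Fin p)) :
    Matrix (Fin n) {j // j ∈ α} ℝ :=
  X.submatrix id (fun j => j.1)

/-- The Gram matrix `X_α' X_α` of the model `α`. -/
def gram {n p : ℕ} (X : Matrix (Fin n) (Fin p) ℝ) (α : Finset (Fin p)) :
    Matrix {j // j ∈ α} {j // j ∈ α} ℝ :=
  (colSub X α)ᵀ * colSub X α

/-- The rank `r_α = rank (X_α' X_α)` of the model `α`. -/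
def rk {n p : ℕ} (X : Matrix (Fin n) (Fin p) ℝ) (α : Finset (Fin p)) : ℕ :=
  (gram X α).rank

/-- The residual sum of squares `R²_α = y'(I − P_n(α))y`, characterized as the minimal
squared distance of `y` from the column span of `X_α`. -/
def R2 {n p : ℕ} (X : Matrix (Fin n) (Fin p) ℝ) (α : Finset (Fin p)) (y : Fin n → ℝ) : ℝ :=
  ⨅ b : {j // j ∈ α} → ℝ, (y - colSub X α *ᵥ b) ⬝ᵥ (y - colSub X α *ᵥ b)

/-- `R²*_α = y'(I − X_α (I/g + X_α'X_α)⁻¹ X_α') y`. -/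
def R2star {n p : ℕ} (g : ℝ) (X : Matrix (Fin n) (Fin p) ℝ) (α : Finset (Fin p))
    (y : Fin n → ℝ) : ℝ :=
  y ⬝ᵥ ((1 - colSub X α *
      (g⁻¹ • (1 : Matrix {j // j ∈ α} {j // j ∈ α} ℝ) + gram X α)⁻¹ * (colSub X α)ᵀ) *ᵥ y)

/-- The distribution of the error vector: `n` iid `N(0, σ²)` coordinates. -/
def gaussErr (n : ℕ) (σ2 : ℝ≥0) : Measure (Fin n → ℝ) :=
  Measure.pi fun _ => gaussianReal 0 σ2

/-- `φ` is a nonzero eigenvalue of `A`. -/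
def IsNzEigen {m : Type*} [Fintype m] (A : Matrix m m ℝ) (φ : ℝ) : Prop :=
  φ ≠ 0 ∧ ∃ v : m → ℝ, v ≠ 0 ∧ A *ᵥ v = φ • v

/-- `τ` is the largest nonzero eigenvalue of `A`. -/
def IsMaxNzEigen {m : Type*} [Fintype m] (A : Matrix m m ℝ) (τ : ℝ) : Prop :=
  IsNzEigen A τ ∧ ∀ φ, IsNzEigen A φ → φ ≤ τ

/-- `τ` is the smallest nonzero eigenvalue of `A`. -/
def IsMinNzEigen {m : Type*} [Fintype m] (A : Matrix m m ℝ) (τ : ℝ) : Prop :=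
  IsNzEigen A τ ∧ ∀ φ, IsNzEigen A φ → τ ≤ φ

/-- The unnormalized posterior weight of model `α` (known error variance `σ2`):
`(p−1)^{−|α|} det(I + g X_α'X_α)^{−1/2} exp(−R²*_α/(2σ²))`. -/
def postWeight {n p : ℕ} (g σ2 : ℝ) (X : Matrix (Fin n) (Fin p) ℝ) (α : Finset (Fin p))
    (y : Fin n → ℝ) : ℝ :=
  ((p : ℝ) - 1)⁻¹ ^ α.card * (Real.sqrt ((1 + g • gram X α).det))⁻¹ *
    Real.exp (-R2star g X α y / (2 * σ2))

/-- The unnormalized posterior weight of model `α` (unknown error variance, Jeffreys prior):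
`(p−1)^{−|α|} det(I + g X_α'X_α)^{−1/2} (R²*_α)^{−n/2}`. -/
def postWeightU {n p : ℕ} (g : ℝ) (X : Matrix (Fin n) (Fin p) ℝ) (α : Finset (Fin p))
    (y : Fin n → ℝ) : ℝ :=
  ((p : ℝ) - 1)⁻¹ ^ α.card * (Real.sqrt ((1 + g • gram X α).det))⁻¹ *
    R2star g X α y ^ (-(n : ℝ) / 2)

lemma aux_lintegral_pi_prod : ∀ (n : ℕ) (f : Fin n → ℝ → ℝ≥0∞), (∀ i, Measurable (f i)) →
    ∫⁻ x : Fin n → ℝ, ∏ i, f i (x i) ∂(Measure.pi fun _ => (volume : Measure ℝ))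
      = ∏ i, ∫⁻ y, f i y := by
  intro n
  induction n with
  | zero => intro f hf; simp
  | succ n ih =>
    intro f hf
    have hmp := measurePreserving_piFinSuccAbove (fun _ : Fin (n+1) => (volume : Measure ℝ)) 0
    have hG : Measurable (fun p : ℝ × (Fin n → ℝ) => f 0 p.1 * ∏ j, f j.succ (p.2 j)) := by
      exact ((hf 0).comp measurable_fst).mul
        (Finset.measurable_prod _ fun j _ => (hf j.succ).comp ((measurable_pi_apply j).comp measurable_snd))
    have key : ∀ x : Fin (n+1) → ℝ,
        (fun p : ℝ × (Fin n → ℝ) => f 0 p.1 * ∏ j, f j.succ (p.2 j))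
          (MeasurableEquiv.piFinSuccAbove (fun _ => ℝ) 0 x) = ∏ i, f i (x i) := by
      intro x
      simp [MeasurableEquiv.piFinSuccAbove, Fin.prod_univ_succ, Fin.zero_succAbove, Fin.tail]
    calc ∫⁻ x : Fin (n+1) → ℝ, ∏ i, f i (x i) ∂(Measure.pi fun _ => (volume : Measure ℝ))
        = ∫⁻ p : ℝ × (Fin n → ℝ), f 0 p.1 * ∏ j : Fin n, f j.succ (p.2 j)
            ∂((volume : Measure ℝ).prod (Measure.pi fun _ => (volume : Measure ℝ))) := by
          rw [← hmp.lintegral_comp hG]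
          exact lintegral_congr fun x => (key x).symm
      _ = (∫⁻ y, f 0 y) * ∏ j : Fin n, ∫⁻ y, f j.succ y := by
          rw [lintegral_prod_mul (μ := (volume : Measure ℝ))
              (ν := Measure.pi fun _ : Fin n => (volume : Measure ℝ)) (f := f 0)
              (g := fun x => ∏ j : Fin n, f j.succ (x j)) (hf 0).aemeasurable
              ((Finset.measurable_prod _ fun j _ =>
                (hf j.succ).comp (measurable_pi_apply j)).aemeasurable),
            ih _ fun j => hf j.succ]
      _ = ∏ i, ∫⁻ y, f i y := (Fin.prod_univ_succ (fun i => ∫⁻ y, f i y)).symm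

lemma aux_pi_gaussian_eq (r : ℕ) :
    (Measure.pi fun _ : Fin r => gaussianReal 0 1)
      = (volume : Measure (Fin r → ℝ)).withDensity
          (fun x => ∏ i, gaussianPDF 0 1 (x i)) := by
  refine Measure.pi_eq fun s hs => ?_
  have hD : Measurable fun x : Fin r → ℝ => ∏ i, gaussianPDF 0 1 (x i) :=
    Finset.measurable_prod _ fun i _ =>
      (measurable_gaussianPDF 0 1).comp (measurable_pi_apply i)
  rw [withDensity_apply _ (MeasurableSet.univ_pi hs),
    ← lintegral_indicator (MeasurableSet.univ_pi hs) _]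
  have hpt : ∀ x : Fin r → ℝ,
      (Set.univ.pi s).indicator (fun x => ∏ i, gaussianPDF 0 1 (x i)) x
        = ∏ i, (s i).indicator (gaussianPDF 0 1) (x i) := by
    intro x
    by_cases hx : x ∈ Set.univ.pi s
    · rw [Set.indicator_of_mem hx]
      exact Finset.prod_congr rfl fun i _ =>
        (Set.indicator_of_mem (hx i (Set.mem_univ i)) _).symm
    · rw [Set.indicator_of_notMem hx]
      have : ∃ i, x i ∉ s i := by
        by_contra h
        push_neg at h
        exact hx fun i _ => h i
      obtain ⟨i, hi⟩ := this
      exact (Finset.prod_eq_zero (Finset.mem_univ i)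
        (Set.indicator_of_notMem hi _)).symm
  rw [lintegral_congr hpt, volume_pi,
    aux_lintegral_pi_prod r _ fun i => (measurable_gaussianPDF 0 1).indicator (hs i)]
  refine Finset.prod_congr rfl fun i _ => ?_
  rw [lintegral_indicator (hs i) _, ← withDensity_apply _ (hs i),
    ← gaussianReal_of_var_ne_zero 0 one_ne_zero]

lemma aux_prod_pdf {r : ℕ} (x : Fin r → ℝ) :
    ∏ i, gaussianPDF 0 1 (x i)
      = ENNReal.ofReal ((Real.sqrt (2 * Real.pi))⁻¹ ^ r
          * Real.exp (-(∑ i, (x i) ^ 2) / 2)) := by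
  have h1 : ∀ i : Fin r, gaussianPDF 0 1 (x i)
      = ENNReal.ofReal ((Real.sqrt (2 * Real.pi))⁻¹ * Real.exp (-(x i) ^ 2 / 2)) := by
    intro i
    simp [gaussianPDF, gaussianPDFReal]
  simp_rw [h1]
  rw [← ENNReal.ofReal_prod_of_nonneg]
  · congr 1
    rw [Finset.prod_mul_distrib, Finset.prod_const, ← Real.exp_sum]
    congr 2
    · simp [Finset.card_univ]
    · rw [← Finset.sum_div, ← Finset.sum_neg_distrib]
  · intro i _
    positivity

lemma aux_gauss_preserving {r : ℕ} {Φ : (Fin r → ℝ) → (Fin r → ℝ)}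
    (hΦ : MeasurePreserving Φ (volume : Measure (Fin r → ℝ)) volume)
    (hsum : ∀ w, ∑ i, (Φ w i) ^ 2 = ∑ i, (w i) ^ 2) :
    MeasurePreserving Φ (Measure.pi fun _ : Fin r => gaussianReal 0 1)
      (Measure.pi fun _ : Fin r => gaussianReal 0 1) := by
  set D : (Fin r → ℝ) → ℝ≥0∞ := fun x => ∏ i, gaussianPDF 0 1 (x i) with hDdef
  have hD : Measurable D :=
    Finset.measurable_prod _ fun i _ =>
      (measurable_gaussianPDF 0 1).comp (measurable_pi_apply i)
  have hcomp : ∀ x, D (Φ x) = D x := by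
    intro x
    rw [hDdef]
    simp only
    rw [aux_prod_pdf, aux_prod_pdf, hsum]
  refine ⟨hΦ.measurable, ?_⟩
  rw [aux_pi_gaussian_eq]
  ext s hs
  rw [Measure.map_apply hΦ.measurable hs,
    withDensity_apply _ (hΦ.measurable hs), withDensity_apply _ hs,
    ← lintegral_indicator (hΦ.measurable hs) _, ← lintegral_indicator hs _]
  have : ∀ x, (Φ ⁻¹' s).indicator D x = s.indicator D (Φ x) := by
    intro x
    by_cases hx : Φ x ∈ s
    · rw [Set.indicator_of_mem hx, Set.indicator_of_mem (Set.mem_preimage.mpr hx)]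
      exact (hcomp x).symm
    · rw [Set.indicator_of_notMem hx,
        Set.indicator_of_notMem (fun h => hx (Set.mem_preimage.mp h))]
  rw [lintegral_congr this, hΦ.lintegral_comp (hD.indicator hs)]

lemma aux_marginal {r : ℕ} (i0 : Fin r) (a : ℝ) :
    (Measure.pi fun _ : Fin r => gaussianReal 0 1) {w | a < w i0}
      = gaussianReal 0 1 (Set.Ioi a) := by
  have hset : {w : Fin r → ℝ | a < w i0}
      = Set.univ.pi (fun i => if i = i0 then Set.Ioi a else Set.univ) := by
    ext w
    simp only [Set.mem_setOf_eq, Set.mem_pi, Set.mem_univ, forall_true_left]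
    constructor
    · intro h i
      by_cases hi : i = i0 <;> simp [hi, h]
    · intro h
      have := h i0
      simpa using this
  rw [hset, Measure.pi_pi]
  rw [Finset.prod_eq_single i0 (fun i _ hi => by simp [hi]) (fun h => absurd (Finset.mem_univ i0) h)]
  simp

/-- **Lemma 2.** Tail bound for the non-central chi-square distribution: if
`W = Σᵢ (Zᵢ + μᵢ)²` with `Z₁,…,Z_r` iid standard normal and `λ = ‖μ‖² > 0`, then
`P(W > t) ≤ P(χ²_r > (t−λ)/2) + P(Z > (t−λ)/(4√λ))`. -/
theorem noncentral_chisq_tail_bound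
    (r : ℕ) (μv : Fin r → ℝ) (hlam : 0 < μv ⬝ᵥ μv) (t : ℝ) :
    (Measure.pi fun _ : Fin r => gaussianReal 0 1)
        {z | t < ∑ i, (z i + μv i) ^ 2}
      ≤ (Measure.pi fun _ : Fin r => gaussianReal 0 1)
          {z | (t - μv ⬝ᵥ μv) / 2 < ∑ i, z i ^ 2}
        + gaussianReal 0 1 {x | (t - μv ⬝ᵥ μv) / (4 * Real.sqrt (μv ⬝ᵥ μv)) < x} := by
  
  classical
  have hlam'0 : μv ⬝ᵥ μv = ∑ i, μv i ^ 2 := by simp [dotProduct, sq]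
  have hr : 0 < r := by
    rcases Nat.eq_zero_or_pos r with h | h
    · subst h; simp [dotProduct] at hlam
    · exact h
  set lam : ℝ := μv ⬝ᵥ μv with hlamdef
  have hlam' : lam = ∑ i, μv i ^ 2 := hlam'0
  set s : ℝ := Real.sqrt lam with hsdef
  have hs : 0 < s := Real.sqrt_pos.mpr hlam
  have hs2 : s ^ 2 = lam := Real.sq_sqrt hlam.le
  set γ := Measure.pi fun _ : Fin r => gaussianReal 0 1 with hγ
  have hmeasB : MeasurableSet {z : Fin r → ℝ | (t - lam) / 4 < ∑ i, μv i * z i} :=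
    measurableSet_lt measurable_const
      (Finset.measurable_sum _ fun i _ => (by fun_prop))
  have hsub : {z : Fin r → ℝ | t < ∑ i, (z i + μv i) ^ 2}
      ⊆ {z : Fin r → ℝ | (t - lam) / 2 < ∑ i, z i ^ 2}
        ∪ {z : Fin r → ℝ | (t - lam) / 4 < ∑ i, μv i * z i} := by
    intro z hz
    simp only [Set.mem_setOf_eq] at hz
    simp only [Set.mem_union, Set.mem_setOf_eq]
    by_contra h
    push_neg at h
    obtain ⟨h1, h2⟩ := h
    have hexp : ∑ i, (z i + μv i) ^ 2
        = ∑ i, z i ^ 2 + 2 * ∑ i, μv i * z i + lam := by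
      rw [hlam', Finset.mul_sum, ← Finset.sum_add_distrib, ← Finset.sum_add_distrib]
      exact Finset.sum_congr rfl fun i _ => by ring
    rw [hexp] at hz
    linarith
  -- the unit vector u and an orthonormal basis sending i0 to u
  set u : EuclideanSpace ℝ (Fin r) :=
    (WithLp.equiv 2 (Fin r → ℝ)).symm (fun i => μv i / s) with hudef
  have hui : ∀ i, u i = μv i / s := fun i => rfl
  have hnorm_sq : ∀ y : EuclideanSpace ℝ (Fin r), ∑ i, (y i) ^ 2 = ‖y‖ ^ 2 := by
    intro y
    rw [EuclideanSpace.norm_eq, Real.sq_sqrt (by positivity)]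
    simp [Real.norm_eq_abs, sq_abs]
  have hu1 : ∑ i, (u i) ^ 2 = 1 := by
    simp_rw [hui, div_pow]
    rw [← Finset.sum_div, ← hlam', hs2, div_self hlam.ne']
  have hu_norm : ‖u‖ = 1 := by
    have h2 : ‖u‖ ^ 2 = 1 := by rw [← hnorm_sq u]; exact hu1
    nlinarith [norm_nonneg u]
  set i0 : Fin r := ⟨0, hr⟩ with hi0def
  have hON : Orthonormal ℝ (({i0} : Set (Fin r)).restrict
      (fun _ : Fin r => u)) := by
    rw [orthonormal_iff_ite]
    intro i j
    have hij : i = j := Subsingleton.elim i j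
    subst hij
    simp [Set.restrict, real_inner_self_eq_norm_sq, hu_norm]
  obtain ⟨b, hb⟩ := hON.exists_orthonormalBasis_extension_of_card_eq
    (by simp [finrank_euclideanSpace_fin])
  have hbi0 : b i0 = u := hb i0 rfl
  set me := (MeasurableEquiv.toLp 2 (Fin r → ℝ)).symm with hmedef
  set Φ : (Fin r → ℝ) → (Fin r → ℝ) := fun w => me (b.repr.symm (me.symm w)) with hΦdef
  have hΦvol : MeasurePreserving Φ (volume : Measure (Fin r → ℝ)) volume :=
    ((EuclideanSpace.volume_preserving_symm_measurableEquiv_toLp (Fin r)).comp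
      b.measurePreserving_repr_symm).comp
      (EuclideanSpace.volume_preserving_symm_measurableEquiv_toLp (Fin r)).symm
  have hΦcoord : ∀ w i, Φ w i = (b.repr.symm (me.symm w)) i := fun w i => rfl
  have hmecoord : ∀ (w : Fin r → ℝ) i, (me.symm w) i = w i := fun w i => rfl
  have hΦsum : ∀ w, ∑ i, (Φ w i) ^ 2 = ∑ i, (w i) ^ 2 := by
    intro w
    have h1 : ∑ i, (Φ w i) ^ 2 = ‖b.repr.symm (me.symm w)‖ ^ 2 := by
      simp_rw [hΦcoord w]
      exact hnorm_sq _
    rw [h1, LinearIsometryEquiv.norm_map, ← hnorm_sq (me.symm w)]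
    exact Finset.sum_congr rfl fun i _ => by rw [hmecoord]
  have hΦγ : MeasurePreserving Φ γ γ := aux_gauss_preserving hΦvol hΦsum
  have hΦlin : ∀ w, ∑ i, μv i * Φ w i = s * w i0 := by
    intro w
    have h1 : ∀ i, μv i = s * u i := by
      intro i; rw [hui]; field_simp
    calc ∑ i, μv i * Φ w i
        = s * ∑ i, u i * (b.repr.symm (me.symm w)) i := by
          rw [Finset.mul_sum]
          exact Finset.sum_congr rfl fun i _ => by rw [h1 i, hΦcoord]; ring
      _ = s * (inner ℝ u (b.repr.symm (me.symm w)) : ℝ) := by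
          rw [PiLp.inner_apply]
          simp [RCLike.inner_apply, mul_comm]
      _ = s * (b.repr (b.repr.symm (me.symm w)) i0) := by
          rw [← hbi0, b.repr_apply_apply]
      _ = s * w i0 := by rw [LinearIsometryEquiv.apply_symm_apply, hmecoord]
  have hγB : γ {z : Fin r → ℝ | (t - lam) / 4 < ∑ i, μv i * z i}
      = gaussianReal 0 1 {x | (t - lam) / (4 * s) < x} := by
    rw [← hΦγ.map_eq, Measure.map_apply hΦγ.measurable hmeasB]
    have hpre : Φ ⁻¹' {z : Fin r → ℝ | (t - lam) / 4 < ∑ i, μv i * z i}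
        = {w : Fin r → ℝ | (t - lam) / (4 * s) < w i0} := by
      ext w
      simp only [Set.mem_preimage, Set.mem_setOf_eq, hΦlin w]
      rw [show (t - lam) / (4 * s) = ((t - lam) / 4) / s from by rw [div_div],
        div_lt_iff₀ hs, mul_comm]
    rw [hpre]
    exact aux_marginal i0 ((t - lam) / (4 * s))
  calc γ {z : Fin r → ℝ | t < ∑ i, (z i + μv i) ^ 2}
      ≤ γ ({z : Fin r → ℝ | (t - lam) / 2 < ∑ i, z i ^ 2}
          ∪ {z : Fin r → ℝ | (t - lam) / 4 < ∑ i, μv i * z i}) := measure_mono hsub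
    _ ≤ γ {z : Fin r → ℝ | (t - lam) / 2 < ∑ i, z i ^ 2}
        + γ {z : Fin r → ℝ | (t - lam) / 4 < ∑ i, μv i * z i} := measure_union_le _ _
    _ = γ {z : Fin r → ℝ | (t - lam) / 2 < ∑ i, z i ^ 2}
        + gaussianReal 0 1 {x | (t - lam) / (4 * s) < x} := by rw [hγB]
end
end

section
/- (Closed form of the marginal likelihood under the conjugate Gaussian prior.) Let y ∈ ℝⁿ, let X be an n×k real matrix, and let σ² > 0, g > 0. Then ∫_{ℝ^k} (2πσ²)^{−n/2} exp(−‖y − Xβ‖²/(2σ²)) · (2πgσ²)^{−k/2} exp(−‖β‖²/(2gσ²)) dβ = (2πσ²)^{−n/2} det(I_k + g X'X)^{−1/2} exp(−R²*/(2σ²)), where R²* = y'( I_n − X (I_k/g + X'X)^{−1} X' ) y. -/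
open MeasureTheory ProbabilityTheory Matrix Filter
open scoped ENNReal NNReal Topology BigOperators

noncomputable section

section Helpers

open Real

private lemma dot_mulVec_symm' {k : ℕ} (M : Matrix (Fin k) (Fin k) ℝ) (hM : Mᵀ = M)
    (u v : Fin k → ℝ) : u ⬝ᵥ (M *ᵥ v) = v ⬝ᵥ (M *ᵥ u) := by
  rw [Matrix.dotProduct_mulVec, ← Matrix.mulVec_transpose, hM, dotProduct_comm]

private lemma dot_mulVec_left' {n k : ℕ} (X : Matrix (Fin n) (Fin k) ℝ) (y : Fin n → ℝ)
    (b : Fin k → ℝ) : y ⬝ᵥ (X *ᵥ b) = (Xᵀ *ᵥ y) ⬝ᵥ b := by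
  rw [Matrix.dotProduct_mulVec, ← Matrix.mulVec_transpose]

private lemma gaussK' {k : ℕ} {c : ℝ} (hc : 0 < c) :
    ∫ v : Fin k → ℝ, Real.exp (-(v ⬝ᵥ v) / c) = Real.sqrt (Real.pi * c) ^ k := by
  have h : ∀ v : Fin k → ℝ, Real.exp (-(v ⬝ᵥ v) / c) = ∏ i, Real.exp (-c⁻¹ * (v i) ^ 2) := by
    intro v
    rw [← Real.exp_sum]
    congr 1
    simp only [dotProduct, neg_div, Finset.sum_div]
    rw [← Finset.sum_neg_distrib]
    congr 1 with i
    ring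
  simp_rw [h]
  rw [MeasureTheory.volume_pi, MeasureTheory.integral_fintype_prod_eq_pow (ι := Fin k) (fun x : ℝ => Real.exp (-c⁻¹ * x ^ 2))]
  rw [integral_gaussian, Fintype.card_fin]
  congr 1
  field_simp

private lemma cov' {k : ℕ} (S : Matrix (Fin k) (Fin k) ℝ) (hdS : S.det ≠ 0)
    (h : (Fin k → ℝ) → ℝ) (hcont : Continuous h) :
    ∫ b : Fin k → ℝ, h (S *ᵥ b) = |S.det|⁻¹ * ∫ v : Fin k → ℝ, h v := by
  have hT : Continuous (Matrix.toLin' S) := LinearMap.continuous_on_pi _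
  have h1 : ∫ b : Fin k → ℝ, h (S *ᵥ b)
      = ∫ v, h v ∂(MeasureTheory.Measure.map (Matrix.toLin' S) MeasureTheory.volume) := by
    rw [MeasureTheory.integral_map hT.aemeasurable hcont.aestronglyMeasurable]
    simp [Matrix.toLin'_apply]
  rw [h1, Real.map_matrix_volume_pi_eq_smul_volume_pi hdS,
    MeasureTheory.integral_smul_measure, ENNReal.toReal_ofReal (abs_nonneg _), abs_inv]
  simp [smul_eq_mul]

private lemma posdefA' {n k : ℕ} (X : Matrix (Fin n) (Fin k) ℝ) {g : ℝ} (hg : 0 < g) :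
    (g⁻¹ • (1 : Matrix (Fin k) (Fin k) ℝ) + Xᵀ * X).PosDef := by
  have h1 : (g⁻¹ • (1 : Matrix (Fin k) (Fin k) ℝ)).PosDef := by
    rw [Matrix.smul_one_eq_diagonal]
    exact Matrix.PosDef.diagonal (fun i => by positivity)
  have h2 : (Xᵀ * X).PosSemidef := by
    simpa [Matrix.conjTranspose_eq_transpose_of_trivial] using
      Matrix.posSemidef_conjTranspose_mul_self X
  exact h1.add_posSemidef h2

end Helpers

/-- **Closed form of the marginal likelihood under the conjugate Gaussian prior.**
`∫ (2πσ²)^{−n/2} e^{−‖y−Xβ‖²/(2σ²)} (2πgσ²)^{−k/2} e^{−‖β‖²/(2gσ²)} dβ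
  = (2πσ²)^{−n/2} det(I + gX'X)^{−1/2} e^{−R²*/(2σ²)}`. -/
theorem marginal_likelihood_closed_form
    {n k : ℕ} (y : Fin n → ℝ) (X : Matrix (Fin n) (Fin k) ℝ) (σ2 g : ℝ)
    (hσ2 : 0 < σ2) (hg : 0 < g) :
    (∫ b : Fin k → ℝ,
        (2 * Real.pi * σ2) ^ (-(n : ℝ) / 2) *
          Real.exp (-((y - X *ᵥ b) ⬝ᵥ (y - X *ᵥ b)) / (2 * σ2)) *
        ((2 * Real.pi * (g * σ2)) ^ (-(k : ℝ) / 2) *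
          Real.exp (-(b ⬝ᵥ b) / (2 * (g * σ2)))))
      = (2 * Real.pi * σ2) ^ (-(n : ℝ) / 2) *
          (Real.sqrt ((1 + g • (Xᵀ * X)).det))⁻¹ *
          Real.exp (-(y ⬝ᵥ ((1 - X * (g⁻¹ • (1 : Matrix (Fin k) (Fin k) ℝ) + Xᵀ * X)⁻¹ * Xᵀ) *ᵥ y))
            / (2 * σ2)) := by
  classical
  set A : Matrix (Fin k) (Fin k) ℝ := g⁻¹ • (1 : Matrix (Fin k) (Fin k) ℝ) + Xᵀ * X with hAdef
  have hA : A.PosDef := posdefA' X hg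
  have hAsymm : Aᵀ = A := by
    rw [hAdef]
    simp [Matrix.transpose_add, Matrix.transpose_smul, Matrix.transpose_mul,
      Matrix.transpose_one, Matrix.transpose_transpose]
  have hdetA : 0 < A.det := hA.det_pos
  have hU : IsUnit A.det := isUnit_iff_ne_zero.mpr hdetA.ne'
  set w : Fin k → ℝ := Xᵀ *ᵥ y with hwdef
  set μ : Fin k → ℝ := A⁻¹ *ᵥ w with hmudef
  have hAμ : A *ᵥ μ = w := by
    rw [hmudef, Matrix.mulVec_mulVec, Matrix.mul_nonsing_inv _ hU, Matrix.one_mulVec]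
  set R : ℝ := y ⬝ᵥ ((1 - X * A⁻¹ * Xᵀ) *ᵥ y) with hRdef
  have hR : R = y ⬝ᵥ y - μ ⬝ᵥ w := by
    rw [hRdef, Matrix.sub_mulVec, dotProduct_sub, Matrix.one_mulVec]
    congr 1
    rw [← Matrix.mulVec_mulVec, ← Matrix.mulVec_mulVec, dot_mulVec_left', ← hwdef, ← hmudef]
    exact dotProduct_comm _ _
  have hQ : ∀ b : Fin k → ℝ, (y - X *ᵥ b) ⬝ᵥ (y - X *ᵥ b) + (b ⬝ᵥ b) / g
      = (b - μ) ⬝ᵥ (A *ᵥ (b - μ)) + R := by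
    intro b
    have h1 : y ⬝ᵥ (X *ᵥ b) = w ⬝ᵥ b := by rw [dot_mulVec_left', ← hwdef]
    have h2 : (X *ᵥ b) ⬝ᵥ y = w ⬝ᵥ b := by rw [dotProduct_comm]; exact h1
    have h3 : (X *ᵥ b) ⬝ᵥ (X *ᵥ b) = b ⬝ᵥ ((Xᵀ * X) *ᵥ b) := by
      rw [dot_mulVec_left', Matrix.mulVec_mulVec, dotProduct_comm]
    have e1 : (y - X *ᵥ b) ⬝ᵥ (y - X *ᵥ b)
        = y ⬝ᵥ y - 2 * (w ⬝ᵥ b) + b ⬝ᵥ ((Xᵀ * X) *ᵥ b) := by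
      rw [dotProduct_sub, sub_dotProduct, sub_dotProduct, h1, h2, h3]
      ring
    have e2 : b ⬝ᵥ (A *ᵥ b) = b ⬝ᵥ ((Xᵀ * X) *ᵥ b) + (b ⬝ᵥ b) / g := by
      rw [hAdef, Matrix.add_mulVec, dotProduct_add, Matrix.smul_mulVec,
        Matrix.one_mulVec, dotProduct_smul]
      simp [smul_eq_mul]
      ring
    have h4 : μ ⬝ᵥ (A *ᵥ b) = w ⬝ᵥ b := by
      rw [dot_mulVec_symm' A hAsymm, hAμ, dotProduct_comm]
    have h5 : b ⬝ᵥ (A *ᵥ μ) = w ⬝ᵥ b := by rw [hAμ, dotProduct_comm]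
    have h6 : μ ⬝ᵥ (A *ᵥ μ) = μ ⬝ᵥ w := by rw [hAμ]
    have e3 : (b - μ) ⬝ᵥ (A *ᵥ (b - μ))
        = b ⬝ᵥ (A *ᵥ b) - 2 * (w ⬝ᵥ b) + μ ⬝ᵥ w := by
      rw [Matrix.mulVec_sub, dotProduct_sub, sub_dotProduct,
        sub_dotProduct, h4, h5, h6]
      ring
    rw [e1, e3, e2, hR]
    ring
  -- the positive square root S of A
  set S : Matrix (Fin k) (Fin k) ℝ := (open scoped MatrixOrder in CFC.sqrt A) with hSdef
  have hSherm := (open scoped MatrixOrder in (CFC.sqrt_nonneg A).posSemidef).1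
  have hSsymm : Sᵀ = S := by
    rwa [Matrix.IsHermitian, Matrix.conjTranspose_eq_transpose_of_trivial] at hSherm
  have hSS : S * S = A := open scoped MatrixOrder in CFC.sqrt_mul_sqrt_self A hA.posSemidef.nonneg
  have hdetSsq : S.det * S.det = A.det := by rw [← Matrix.det_mul, hSS]
  have hdS : S.det ≠ 0 := by
    intro h
    rw [h, mul_zero] at hdetSsq
    exact hdetA.ne' hdetSsq.symm
  have habs : |S.det| = Real.sqrt A.det := by
    rw [← hdetSsq, Real.sqrt_mul_self_eq_abs]
  have hform : ∀ b : Fin k → ℝ, b ⬝ᵥ (A *ᵥ b) = (S *ᵥ b) ⬝ᵥ (S *ᵥ b) := by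
    intro b
    rw [← hSS, ← Matrix.mulVec_mulVec, Matrix.dotProduct_mulVec, ← Matrix.mulVec_transpose,
      hSsymm]
  have hc : (0:ℝ) < 2 * σ2 := by linarith
  -- pointwise rewriting of the integrand
  set C1 : ℝ := (2 * Real.pi * σ2) ^ (-(n : ℝ) / 2) with hC1def
  set C2 : ℝ := (2 * Real.pi * (g * σ2)) ^ (-(k : ℝ) / 2) with hC2def
  set Ef : ℝ := Real.exp (-R / (2 * σ2)) with hEfdef
  have hpt : ∀ b : Fin k → ℝ,
      C1 * Real.exp (-((y - X *ᵥ b) ⬝ᵥ (y - X *ᵥ b)) / (2 * σ2)) *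
        (C2 * Real.exp (-(b ⬝ᵥ b) / (2 * (g * σ2))))
      = (C1 * C2 * Ef) * Real.exp (-((b - μ) ⬝ᵥ (A *ᵥ (b - μ))) / (2 * σ2)) := by
    intro b
    have hexp : Real.exp (-((y - X *ᵥ b) ⬝ᵥ (y - X *ᵥ b)) / (2 * σ2)) *
        Real.exp (-(b ⬝ᵥ b) / (2 * (g * σ2)))
        = Real.exp (-((b - μ) ⬝ᵥ (A *ᵥ (b - μ))) / (2 * σ2)) * Real.exp (-R / (2 * σ2)) := by
      rw [← Real.exp_add, ← Real.exp_add]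
      congr 1
      have h1 : -((y - X *ᵥ b) ⬝ᵥ (y - X *ᵥ b)) / (2 * σ2) + -(b ⬝ᵥ b) / (2 * (g * σ2))
          = -((y - X *ᵥ b) ⬝ᵥ (y - X *ᵥ b) + (b ⬝ᵥ b) / g) / (2 * σ2) := by
        field_simp
        ring
      rw [h1, hQ b]
      ring
    calc C1 * Real.exp (-((y - X *ᵥ b) ⬝ᵥ (y - X *ᵥ b)) / (2 * σ2)) *
        (C2 * Real.exp (-(b ⬝ᵥ b) / (2 * (g * σ2))))
        = (C1 * C2) * (Real.exp (-((y - X *ᵥ b) ⬝ᵥ (y - X *ᵥ b)) / (2 * σ2)) *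
            Real.exp (-(b ⬝ᵥ b) / (2 * (g * σ2)))) := by ring
      _ = (C1 * C2) * (Real.exp (-((b - μ) ⬝ᵥ (A *ᵥ (b - μ))) / (2 * σ2)) * Ef) := by
          rw [hexp, hEfdef]
      _ = (C1 * C2 * Ef) * Real.exp (-((b - μ) ⬝ᵥ (A *ᵥ (b - μ))) / (2 * σ2)) := by ring
  rw [MeasureTheory.integral_congr_ae (MeasureTheory.ae_of_all _ hpt),
    MeasureTheory.integral_const_mul]
  -- translation invariance
  have hshift : (∫ b : Fin k → ℝ, Real.exp (-((b - μ) ⬝ᵥ (A *ᵥ (b - μ))) / (2 * σ2)))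
      = ∫ b : Fin k → ℝ, Real.exp (-(b ⬝ᵥ (A *ᵥ b)) / (2 * σ2)) := by
    have := MeasureTheory.integral_add_right_eq_self
      (μ := MeasureTheory.volume)
      (fun x : Fin k → ℝ => Real.exp (-(x ⬝ᵥ (A *ᵥ x)) / (2 * σ2))) (-μ)
    simpa [sub_eq_add_neg] using this
  rw [hshift]
  -- change of variables b ↦ S b
  have hJ : (∫ b : Fin k → ℝ, Real.exp (-(b ⬝ᵥ (A *ᵥ b)) / (2 * σ2)))
      = |S.det|⁻¹ * ∫ v : Fin k → ℝ, Real.exp (-(v ⬝ᵥ v) / (2 * σ2)) := by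
    have hcont : Continuous (fun v : Fin k → ℝ => Real.exp (-(v ⬝ᵥ v) / (2 * σ2))) := by
      have hd : Continuous (fun v : Fin k → ℝ => v ⬝ᵥ v) := by
        unfold dotProduct
        exact continuous_finset_sum _ (fun i _ => (continuous_apply i).mul (continuous_apply i))
      exact Real.continuous_exp.comp ((hd.neg).div_const _)
    have := cov' S hdS (fun v => Real.exp (-(v ⬝ᵥ v) / (2 * σ2))) hcont
    rw [← this]
    congr 1 with b
    rw [hform b]
  rw [hJ, gaussK' hc, habs]
  -- final constant bookkeeping
  have hdet1 : (1 + g • (Xᵀ * X)).det = g ^ k * A.det := by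
    have hgA : (1 : Matrix (Fin k) (Fin k) ℝ) + g • (Xᵀ * X) = g • A := by
      rw [hAdef, smul_add, smul_smul, mul_inv_cancel₀ hg.ne', one_smul]
    rw [hgA, Matrix.det_smul, Fintype.card_fin]
  rw [hdet1]
  have hπ : (0:ℝ) < Real.pi := Real.pi_pos
  have ha : (0:ℝ) < 2 * Real.pi * σ2 := by positivity
  have hsa : (0:ℝ) < Real.sqrt (2 * Real.pi * σ2) := Real.sqrt_pos.mpr ha
  have hsg : (0:ℝ) < Real.sqrt g := Real.sqrt_pos.mpr hg
  have hsd : (0:ℝ) < Real.sqrt A.det := Real.sqrt_pos.mpr hdetA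
  have hC2 : C2 = ((Real.sqrt g)⁻¹ * (Real.sqrt (2 * Real.pi * σ2))⁻¹) ^ k := by
    have hx : (0:ℝ) < 2 * Real.pi * (g * σ2) := by positivity
    have h1 : C2 = ((2 * Real.pi * (g * σ2)) ^ ((1:ℝ)/2))⁻¹ ^ k := by
      rw [hC2def, ← Real.rpow_natCast (((2 * Real.pi * (g * σ2)) ^ ((1:ℝ)/2))⁻¹) k,
        ← Real.rpow_neg_one, ← Real.rpow_mul hx.le, ← Real.rpow_mul (by positivity)]
      congr 1
      push_cast
      ring
    have h2 : Real.sqrt (2 * Real.pi * (g * σ2))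
        = Real.sqrt g * Real.sqrt (2 * Real.pi * σ2) := by
      rw [show 2 * Real.pi * (g * σ2) = g * (2 * Real.pi * σ2) by ring,
        Real.sqrt_mul hg.le]
    rw [h1]
    congr 1
    rw [← Real.sqrt_eq_rpow, h2, mul_inv]
  have hsq : Real.sqrt (Real.pi * (2 * σ2)) = Real.sqrt (2 * Real.pi * σ2) := by
    congr 1
    ring
  have hgk : Real.sqrt (g ^ k * A.det) = Real.sqrt g ^ k * Real.sqrt A.det := by
    have h0 : g ^ k = (Real.sqrt g ^ k) ^ 2 := by
      rw [← pow_mul, mul_comm, pow_mul, Real.sq_sqrt hg.le]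
    rw [h0, Real.sqrt_mul (sq_nonneg _), Real.sqrt_sq (pow_nonneg hsg.le k)]
  rw [hsq, hC2, hgk]
  field_simp
  have e1 : Real.sqrt g ^ k * (Real.sqrt g)⁻¹ ^ k = 1 := by
    rw [← mul_pow, mul_inv_cancel₀ hsg.ne', one_pow]
  have e2 : Real.sqrt (2 * Real.pi * σ2) ^ k * (Real.sqrt (2 * Real.pi * σ2))⁻¹ ^ k = 1 := by
    rw [← mul_pow, mul_inv_cancel₀ (by positivity), one_pow]
  linear_combination (C1 * Ef * Real.sqrt (2 * Real.pi * σ2) ^ k *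
    (Real.sqrt (2 * Real.pi * σ2))⁻¹ ^ k) * e1 + C1 * Ef * e2
end
end
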